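/- arXiv:2406.12596 — 2 statements merged into one kernel-verified Lean document; each statement's English description precedes it below -/
import Mathlib

section
/- (Lemma 1, mean) Let M ≥ 1, let π be a uniformly random permutation of {0, 1, …, M−1}, and for p, q ∈ ℝ define the random beam correlation η(p,q) = (1/M)·∑_{m=0}^{M−1} exp(i·2π·(m·p − π(m)·q)). Then E[η(p,q)] = [(1/M)·∑_{m=0}^{M−1} exp(i·2π·m·p)] · [(1/M)·∑_{z=0}^{M−1} exp(−i·2π·z·q)]; in particular, for p, q ∉ ℤ, E[η(p,q)] = Sa_M(p)·Sa_M(q)·exp(i·π·(M−1)·(p − q)) where Sa_M(x) = sin(π·M·x)/(M·sin(π·x)). -/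
open Complex Finset

lemma exp_I_sub_one (θ : ℝ) :
    Complex.exp (Complex.I * θ) - 1
      = Complex.exp (Complex.I * (θ/2 : ℝ)) * (2 * Real.sin (θ/2) * Complex.I) := by
  have h2s := Complex.two_sin (x := ((θ/2 : ℝ) : ℂ))
  have hdiff : Complex.exp (((θ/2:ℝ):ℂ) * I) - Complex.exp (-((θ/2:ℝ):ℂ) * I)
      = 2 * Complex.sin ((θ/2:ℝ):ℂ) * I := by
    have := congrArg (· * I) h2s
    rw [this]; ring_nf; rw [Complex.I_sq]; ring
  have hsplit : Complex.exp (Complex.I * θ)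
      = Complex.exp (Complex.I * (θ/2:ℝ)) * Complex.exp (Complex.I * (θ/2:ℝ)) := by
    rw [← Complex.exp_add]; push_cast; ring_nf
  have hone : Complex.exp (Complex.I * (θ/2:ℝ)) * Complex.exp (-(((θ/2:ℝ):ℂ)) * I) = 1 := by
    rw [← Complex.exp_add]; ring_nf; exact Complex.exp_zero
  calc Complex.exp (Complex.I * θ) - 1
      = Complex.exp (Complex.I * (θ/2:ℝ)) *
          (Complex.exp (((θ/2:ℝ):ℂ) * I) - Complex.exp (-((θ/2:ℝ):ℂ) * I)) := by
        rw [mul_sub, hone, mul_comm (((θ/2:ℝ)):ℂ) I, ← hsplit]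
    _ = _ := by rw [hdiff]; push_cast; ring

lemma geom_closed (N : ℕ) (x : ℝ) (hx : ∀ n : ℤ, x ≠ (n : ℝ)) :
    ∑ m ∈ Finset.range N, Complex.exp (Complex.I * ((2 * Real.pi * (m : ℝ) * x : ℝ) : ℂ))
      = ((Real.sin (Real.pi * N * x) / Real.sin (Real.pi * x) : ℝ) : ℂ) *
        Complex.exp (Complex.I * ((Real.pi * ((N : ℝ) - 1) * x : ℝ) : ℂ)) := by
  set r : ℂ := Complex.exp (Complex.I * ((2 * Real.pi * x : ℝ) : ℂ)) with hr
  have hterm : ∀ m : ℕ, Complex.exp (Complex.I * ((2 * Real.pi * (m : ℝ) * x : ℝ) : ℂ)) = r ^ m := by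
    intro m
    rw [hr, ← Complex.exp_nat_mul]
    congr 1
    push_cast; ring
  have hrne : r ≠ 1 := by
    intro h
    rw [hr, Complex.exp_eq_one_iff] at h
    obtain ⟨n, hn⟩ := h
    have him := congrArg Complex.im hn
    simp [Complex.mul_im, Complex.mul_re] at him
    have h2 : (2 * Real.pi) * x = (2 * Real.pi) * n := by linarith
    exact hx n (mul_left_cancel₀ (by positivity) h2)
  have hsin : Real.sin (Real.pi * x) ≠ 0 := by
    intro h
    rw [Real.sin_eq_zero_iff] at h
    obtain ⟨n, hn⟩ := h
    exact hx n (mul_left_cancel₀ Real.pi_ne_zero (by linarith)).symm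
  have hrN : r ^ N = Complex.exp (Complex.I * ((2 * Real.pi * (N:ℝ) * x : ℝ) : ℂ)) := by
    rw [hr, ← Complex.exp_nat_mul]; congr 1; push_cast; ring
  have harg1 : (2 * Real.pi * (N:ℝ) * x) / 2 = Real.pi * (N:ℝ) * x := by ring
  have harg2 : (2 * Real.pi * x) / 2 = Real.pi * x := by ring
  have hnum : r ^ N - 1 = Complex.exp (Complex.I * ((Real.pi * (N:ℝ) * x : ℝ) : ℂ)) *
      (2 * Real.sin (Real.pi * (N:ℝ) * x) * Complex.I) := by
    rw [hrN, exp_I_sub_one, harg1]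
  have hden : r - 1 = Complex.exp (Complex.I * ((Real.pi * x : ℝ) : ℂ)) *
      (2 * Real.sin (Real.pi * x) * Complex.I) := by
    rw [hr, exp_I_sub_one, harg2]
  have hdenne : r - 1 ≠ 0 := sub_ne_zero.mpr hrne
  have hexp : Complex.exp (Complex.I * ((Real.pi * ((N:ℝ)-1) * x : ℝ) : ℂ)) *
      Complex.exp (Complex.I * ((Real.pi * x : ℝ) : ℂ))
      = Complex.exp (Complex.I * ((Real.pi * (N:ℝ) * x : ℝ) : ℂ)) := by
    rw [← Complex.exp_add]; congr 1; push_cast; ring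
  rw [Finset.sum_congr rfl (fun m _ => hterm m), geom_sum_eq hrne, hnum, div_eq_iff hdenne, hden,
    Complex.ofReal_div]
  have hs2 : (Real.sin (Real.pi * x) : ℂ) ≠ 0 := by exact_mod_cast hsin
  have hcancel : ((Real.sin (Real.pi * (N:ℝ) * x) : ℂ) / (Real.sin (Real.pi * x) : ℂ)) *
      (Real.sin (Real.pi * x) : ℂ) = (Real.sin (Real.pi * (N:ℝ) * x) : ℂ) :=
    div_mul_cancel₀ _ hs2
  linear_combination (-2 * (Real.sin (Real.pi * x) : ℂ) * Complex.I *
      ((Real.sin (Real.pi * (N:ℝ) * x) : ℂ) / (Real.sin (Real.pi * x) : ℂ))) * hexp +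
    (-2 * Complex.I * Complex.exp (Complex.I * ((Real.pi * (N:ℝ) * x : ℝ) : ℂ))) * hcancel

lemma sum_perm_apply (M : ℕ) (f : Fin M → ℂ) (m : Fin M) :
    (M : ℂ) * ∑ σ : Equiv.Perm (Fin M), f (σ m)
      = (Nat.factorial M : ℂ) * ∑ z : Fin M, f z := by
  have hindep : ∀ m' : Fin M,
      ∑ σ : Equiv.Perm (Fin M), f (σ m) = ∑ σ : Equiv.Perm (Fin M), f (σ m') := by
    intro m'
    refine Fintype.sum_equiv (Equiv.mulRight (Equiv.swap m m')) _ _ ?_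
    intro σ
    simp [Equiv.Perm.mul_apply, Equiv.swap_apply_right]
  have h1 : ∑ m' : Fin M, ∑ σ : Equiv.Perm (Fin M), f (σ m')
      = (M : ℂ) * ∑ σ : Equiv.Perm (Fin M), f (σ m) := by
    rw [Finset.sum_congr rfl (fun m' _ => (hindep m').symm)]
    simp [Finset.sum_const, Finset.card_univ, nsmul_eq_mul]
  have h2 : ∑ m' : Fin M, ∑ σ : Equiv.Perm (Fin M), f (σ m')
      = (Nat.factorial M : ℂ) * ∑ z : Fin M, f z := by
    rw [Finset.sum_comm]
    have : ∀ σ : Equiv.Perm (Fin M), ∑ m' : Fin M, f (σ m') = ∑ z : Fin M, f z :=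
      fun σ => Equiv.sum_comp σ f
    rw [Finset.sum_congr rfl (fun σ _ => this σ)]
    simp [Finset.sum_const, Finset.card_univ, Fintype.card_perm, nsmul_eq_mul]
  rw [← h1, h2]


/-- `Sa_M(x) = sin(πMx)/(M sin(πx))`. -/
noncomputable def Sa (M : ℕ) (x : ℝ) : ℝ :=
  Real.sin (Real.pi * (M : ℝ) * x) / ((M : ℝ) * Real.sin (Real.pi * x))

/-- The random beam correlation of the random-permutation FDA:
`η(p,q) = (1/M)·∑_{m<M} exp(i·2π·(m·p − σ(m)·q))`. -/
noncomputable def eta (M : ℕ) (σ : Equiv.Perm (Fin M)) (p q : ℝ) : ℂ :=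
  (M : ℂ)⁻¹ * ∑ m : Fin M,
    Complex.exp (Complex.I * ((2 * Real.pi * (((m : ℕ) : ℝ) * p - ((σ m : ℕ) : ℝ) * q) : ℝ) : ℂ))

/-- (Lemma 1, mean) For a uniformly random permutation `σ` of `{0,…,M−1}`,
`E[η(p,q)]` factors as the product of the two normalized geometric sums; in
particular, for non-integer `p, q`,
`E[η(p,q)] = Sa_M(p)·Sa_M(q)·exp(i·π·(M−1)·(p−q))`. -/
theorem stmt_4 (M : ℕ) (hM : 1 ≤ M) (p q : ℝ) :
    (Nat.factorial M : ℂ)⁻¹ * (∑ σ : Equiv.Perm (Fin M), eta M σ p q)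
      = ((M : ℂ)⁻¹ * ∑ m ∈ Finset.range M,
          Complex.exp (Complex.I * ((2 * Real.pi * (m : ℝ) * p : ℝ) : ℂ))) *
        ((M : ℂ)⁻¹ * ∑ z ∈ Finset.range M,
          Complex.exp (-(Complex.I * ((2 * Real.pi * (z : ℝ) * q : ℝ) : ℂ)))) ∧
    ((∀ n : ℤ, p ≠ (n : ℝ)) → (∀ n : ℤ, q ≠ (n : ℝ)) →
      (Nat.factorial M : ℂ)⁻¹ * (∑ σ : Equiv.Perm (Fin M), eta M σ p q)
        = ((Sa M p * Sa M q : ℝ) : ℂ) *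
          Complex.exp (Complex.I * ((Real.pi * ((M : ℝ) - 1) * (p - q) : ℝ) : ℂ))) := by
  have hM0 : (M : ℂ) ≠ 0 := Nat.cast_ne_zero.mpr (by omega)
  have hMR : (M : ℝ) ≠ 0 := Nat.cast_ne_zero.mpr (by omega)
  have hfac : (Nat.factorial M : ℂ) ≠ 0 := Nat.cast_ne_zero.mpr (Nat.factorial_ne_zero M)
  have hsummand : ∀ (σ : Equiv.Perm (Fin M)) (m : Fin M),
      Complex.exp (Complex.I * ((2 * Real.pi * (((m : ℕ) : ℝ) * p - ((σ m : ℕ) : ℝ) * q) : ℝ) : ℂ))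
        = Complex.exp (Complex.I * ((2 * Real.pi * (((m : ℕ) : ℝ)) * p : ℝ) : ℂ)) *
          Complex.exp (-(Complex.I * ((2 * Real.pi * (((σ m : ℕ) : ℝ)) * q : ℝ) : ℂ))) := by
    intro σ m
    rw [← Complex.exp_add]
    congr 1
    push_cast
    ring
  have hperm : ∀ m : Fin M,
      ∑ σ : Equiv.Perm (Fin M),
        Complex.exp (-(Complex.I * ((2 * Real.pi * (((σ m : ℕ) : ℝ)) * q : ℝ) : ℂ)))
      = (M : ℂ)⁻¹ * (Nat.factorial M : ℂ) *
        ∑ z : Fin M, Complex.exp (-(Complex.I * ((2 * Real.pi * (((z : ℕ) : ℝ)) * q : ℝ) : ℂ))) := by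
    intro m
    have h := sum_perm_apply M
      (fun z : Fin M => Complex.exp (-(Complex.I * ((2 * Real.pi * (((z : ℕ) : ℝ)) * q : ℝ) : ℂ)))) m
    rw [mul_assoc, ← h, inv_mul_cancel_left₀ hM0]
  have key : (Nat.factorial M : ℂ)⁻¹ * (∑ σ : Equiv.Perm (Fin M), eta M σ p q)
      = ((M : ℂ)⁻¹ * ∑ m : Fin M,
          Complex.exp (Complex.I * ((2 * Real.pi * (((m : ℕ) : ℝ)) * p : ℝ) : ℂ))) *
        ((M : ℂ)⁻¹ * ∑ z : Fin M,
          Complex.exp (-(Complex.I * ((2 * Real.pi * (((z : ℕ) : ℝ)) * q : ℝ) : ℂ)))) := by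
    simp only [_root_.eta]
    rw [← Finset.mul_sum]
    have h1 : ∑ σ : Equiv.Perm (Fin M), ∑ m : Fin M,
        Complex.exp (Complex.I * ((2 * Real.pi * (((m : ℕ) : ℝ) * p - ((σ m : ℕ) : ℝ) * q) : ℝ) : ℂ))
        = ∑ m : Fin M,
            Complex.exp (Complex.I * ((2 * Real.pi * (((m : ℕ) : ℝ)) * p : ℝ) : ℂ)) *
            ((M : ℂ)⁻¹ * (Nat.factorial M : ℂ) *
              ∑ z : Fin M,
                Complex.exp (-(Complex.I * ((2 * Real.pi * (((z : ℕ) : ℝ)) * q : ℝ) : ℂ)))) := by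
      rw [Finset.sum_comm]
      refine Finset.sum_congr rfl (fun m _ => ?_)
      rw [Finset.sum_congr rfl (fun σ _ => hsummand σ m), ← Finset.mul_sum, hperm m]
    rw [h1, ← Finset.sum_mul]
    field_simp
    ring
    congr 1 <;> refine Finset.sum_congr rfl (fun x _ => ?_) <;> ring_nf
  have hFinP : ∑ m ∈ Finset.range M,
      Complex.exp (Complex.I * ((2 * Real.pi * (m : ℝ) * p : ℝ) : ℂ))
      = ∑ m : Fin M, Complex.exp (Complex.I * ((2 * Real.pi * (((m : ℕ) : ℝ)) * p : ℝ) : ℂ)) :=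
    (Fin.sum_univ_eq_sum_range
      (fun m : ℕ => Complex.exp (Complex.I * ((2 * Real.pi * (m : ℝ) * p : ℝ) : ℂ))) M).symm
  have hFinQ : ∑ z ∈ Finset.range M,
      Complex.exp (-(Complex.I * ((2 * Real.pi * (z : ℝ) * q : ℝ) : ℂ)))
      = ∑ z : Fin M, Complex.exp (-(Complex.I * ((2 * Real.pi * (((z : ℕ) : ℝ)) * q : ℝ) : ℂ))) :=
    (Fin.sum_univ_eq_sum_range
      (fun z : ℕ => Complex.exp (-(Complex.I * ((2 * Real.pi * (z : ℝ) * q : ℝ) : ℂ)))) M).symm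
  have part1 : (Nat.factorial M : ℂ)⁻¹ * (∑ σ : Equiv.Perm (Fin M), eta M σ p q)
      = ((M : ℂ)⁻¹ * ∑ m ∈ Finset.range M,
          Complex.exp (Complex.I * ((2 * Real.pi * (m : ℝ) * p : ℝ) : ℂ))) *
        ((M : ℂ)⁻¹ * ∑ z ∈ Finset.range M,
          Complex.exp (-(Complex.I * ((2 * Real.pi * (z : ℝ) * q : ℝ) : ℂ)))) := by
    rw [hFinP, hFinQ, key]
  refine ⟨part1, fun hp hq => ?_⟩
  have hq' : ∀ n : ℤ, (-q) ≠ (n : ℝ) := by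
    intro n h
    exact hq (-n) (by push_cast; linarith)
  have hQ : ∑ z ∈ Finset.range M,
      Complex.exp (-(Complex.I * ((2 * Real.pi * (z : ℝ) * q : ℝ) : ℂ)))
      = ∑ z ∈ Finset.range M,
        Complex.exp (Complex.I * ((2 * Real.pi * (z : ℝ) * (-q) : ℝ) : ℂ)) := by
    refine Finset.sum_congr rfl (fun z _ => ?_)
    congr 1
    push_cast
    ring
  rw [part1, hQ, geom_closed M p hp, geom_closed M (-q) hq']
  have hsinq : Real.sin (Real.pi * (M : ℝ) * (-q)) / Real.sin (Real.pi * (-q))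
      = Real.sin (Real.pi * (M : ℝ) * q) / Real.sin (Real.pi * q) := by
    rw [show Real.pi * (M : ℝ) * (-q) = -(Real.pi * (M : ℝ) * q) by ring,
      show Real.pi * (-q) = -(Real.pi * q) by ring, Real.sin_neg, Real.sin_neg, neg_div_neg_eq]
  rw [hsinq]
  have hexp2 : Complex.exp (Complex.I * ((Real.pi * ((M : ℝ) - 1) * p : ℝ) : ℂ)) *
      Complex.exp (Complex.I * ((Real.pi * ((M : ℝ) - 1) * (-q) : ℝ) : ℂ))
      = Complex.exp (Complex.I * ((Real.pi * ((M : ℝ) - 1) * (p - q) : ℝ) : ℂ)) := by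
    rw [← Complex.exp_add]
    congr 1
    push_cast
    ring
  simp only [Complex.ofReal_mul] at hexp2
  simp only [Sa, Complex.ofReal_mul, Complex.ofReal_div, Complex.ofReal_natCast]
  rw [← hexp2]
  ring
end

section
/- (Lemma 1, variance) Let M ≥ 2, let π be a uniformly random permutation of {0, 1, …, M−1}, and for p, q ∈ ℝ with p, q ∉ ℤ define η(p,q) = (1/M)·∑_{m=0}^{M−1} exp(i·2π·(m·p − π(m)·q)). Then the variance Var[η(p,q)] := E[|η(p,q)|²] − |E[η(p,q)]|² equals (M/(M−1))·(Sa_M(p)² − 1/M)·(Sa_M(q)² − 1/M) − Sa_M(p)²·Sa_M(q)² + 1/M, where Sa_M(x) = sin(π·M·x)/(M·sin(π·x)). -/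
open Finset

noncomputable def ee (x : ℝ) (m : ℕ) : ℂ := Complex.exp ((2 * Real.pi * m * x : ℝ) * Complex.I)

lemma ee_eq_pow (x : ℝ) (m : ℕ) :
    ee x m = Complex.exp ((2 * Real.pi * x : ℝ) * Complex.I) ^ m := by
  rw [← Complex.exp_nat_mul]; unfold ee; congr 1; push_cast; ring

lemma conj_ee (x : ℝ) (m : ℕ) : (starRingEnd ℂ) (ee x m) = ee (-x) m := by
  unfold ee
  rw [← Complex.exp_conj, map_mul, Complex.conj_I, Complex.conj_ofReal]
  congr 1
  push_cast; ring

lemma ee_mul_ee_neg (x : ℝ) (m : ℕ) : ee x m * ee (-x) m = 1 := by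
  unfold ee
  rw [← Complex.exp_add, ← Complex.exp_zero]
  congr 1
  push_cast; ring

lemma normSq_exp_sub_one (θ : ℝ) :
    Complex.normSq (Complex.exp ((θ : ℝ) * Complex.I) - 1) = 4 * Real.sin (θ / 2) ^ 2 := by
  rw [Complex.exp_mul_I]
  simp [Complex.normSq_apply, Complex.cos_ofReal_re, Complex.sin_ofReal_re,
    Complex.add_re, Complex.add_im, Complex.mul_re, Complex.mul_im]
  nlinarith [Real.sin_sq_add_cos_sq (θ / 2), Real.cos_two_mul (θ / 2),
    Real.sin_sq_add_cos_sq θ, (by ring_nf : Real.cos (2 * (θ/2)) = Real.cos θ)]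

lemma sin_pi_mul_ne_zero' {x : ℝ} (hx : ∀ k : ℤ, x ≠ (k : ℝ)) : Real.sin (Real.pi * x) ≠ 0 := by
  rw [Ne, Real.sin_eq_zero_iff]
  rintro ⟨n, hn⟩
  have h2 : Real.pi * (n : ℝ) = Real.pi * x := by linarith [mul_comm (n:ℝ) Real.pi]
  exact hx n (mul_left_cancel₀ Real.pi_ne_zero h2).symm

lemma normSq_sum_ee (M : ℕ) (hM : 1 ≤ M) {x : ℝ} (hx : ∀ k : ℤ, x ≠ (k : ℝ)) :
    Complex.normSq (∑ m : Fin M, ee x (m : ℕ)) = ((M : ℝ) * (Real.sin (Real.pi * M * x) / ((M:ℝ) * Real.sin (Real.pi * x)))) ^ 2 := by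
  set w := Complex.exp ((2 * Real.pi * x : ℝ) * Complex.I) with hw_def
  have hw : w ≠ 1 := by
    rw [hw_def, Ne, Complex.exp_eq_one_iff]
    rintro ⟨n, hn⟩
    have h2 : ((2 * Real.pi * x : ℝ) : ℂ) = ((n : ℝ) * (2 * Real.pi) : ℝ) := by
      have := mul_right_cancel₀ Complex.I_ne_zero (by rw [hn]; push_cast; ring :
        ((2 * Real.pi * x : ℝ) : ℂ) * Complex.I = (((n : ℝ) * (2 * Real.pi) : ℝ) : ℂ) * Complex.I)
      exact this
    have h3 : 2 * Real.pi * x = (n : ℝ) * (2 * Real.pi) := Complex.ofReal_inj.mp h2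
    exact hx n (by nlinarith [Real.pi_ne_zero, Real.pi_pos])
  have hsum : (∑ m : Fin M, ee x (m : ℕ)) = (w ^ M - 1) / (w - 1) := by
    rw [← geom_sum_eq hw, ← Fin.sum_univ_eq_sum_range]
    exact Finset.sum_congr rfl fun m _ => ee_eq_pow x m
  have hwM : w ^ M = Complex.exp ((2 * Real.pi * M * x : ℝ) * Complex.I) := by
    rw [hw_def, ← Complex.exp_nat_mul]; congr 1; push_cast; ring
  have hs1 : Real.sin (2 * Real.pi * M * x / 2) = Real.sin (Real.pi * M * x) := by ring_nf
  have hs2 : Real.sin (2 * Real.pi * x / 2) = Real.sin (Real.pi * x) := by ring_nf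
  rw [hsum, map_div₀ Complex.normSq, hwM, normSq_exp_sub_one, normSq_exp_sub_one, hs1, hs2]
  have hM0 : (M : ℝ) ≠ 0 := by positivity
  have hsx : Real.sin (Real.pi * x) ≠ 0 := sin_pi_mul_ne_zero' hx
  field_simp

lemma sum_perm_apply_const {M : ℕ} (g : Fin M → ℂ) (m m' : Fin M) :
    ∑ σ : Equiv.Perm (Fin M), g (σ m) = ∑ σ : Equiv.Perm (Fin M), g (σ m') := by
  refine Fintype.sum_equiv (Equiv.mulRight (Equiv.swap m m')) _ _ fun σ => ?_
  simp [Equiv.Perm.mul_apply, Equiv.swap_apply_left]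

lemma sum_perm_single {M : ℕ} (g : Fin M → ℂ) (m : Fin M) :
    (M : ℂ) * ∑ σ : Equiv.Perm (Fin M), g (σ m)
      = (Nat.factorial M : ℂ) * ∑ n : Fin M, g n := by
  have h1 : ∑ m' : Fin M, ∑ σ : Equiv.Perm (Fin M), g (σ m')
      = (M : ℂ) * ∑ σ : Equiv.Perm (Fin M), g (σ m) := by
    rw [Finset.sum_congr rfl fun m' _ => sum_perm_apply_const g m' m]
    simp [Finset.sum_const, Finset.card_univ, mul_comm]
  rw [← h1, Finset.sum_comm]
  have h2 : ∀ σ : Equiv.Perm (Fin M), ∑ m' : Fin M, g (σ m') = ∑ n : Fin M, g n :=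
    fun σ => Equiv.sum_comp σ g
  rw [Finset.sum_congr rfl fun σ _ => h2 σ]
  simp [Finset.sum_const, Finset.card_univ, Fintype.card_perm, mul_comm]

lemma sum_perm_pair_const {M : ℕ} (g : Fin M → Fin M → ℂ) (m m₁ m₂ : Fin M)
    (h₁ : m₁ ≠ m) (h₂ : m₂ ≠ m) :
    ∑ σ : Equiv.Perm (Fin M), g (σ m) (σ m₁) = ∑ σ : Equiv.Perm (Fin M), g (σ m) (σ m₂) := by
  refine Fintype.sum_equiv (Equiv.mulRight (Equiv.swap m₁ m₂)) _ _ fun σ => ?_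
  simp [Equiv.Perm.mul_apply, Equiv.swap_apply_left,
    Equiv.swap_apply_of_ne_of_ne h₁.symm h₂.symm]

lemma sum_perm_pair {M : ℕ} (g h : Fin M → ℂ) (m m' : Fin M) (hne : m' ≠ m) :
    (M : ℂ) * ((M : ℂ) - 1) * ∑ σ : Equiv.Perm (Fin M), g (σ m) * h (σ m')
      = (Nat.factorial M : ℂ) *
          ((∑ n : Fin M, g n) * (∑ n : Fin M, h n) - ∑ n : Fin M, g n * h n) := by
  have key : ∑ m'' : Fin M, ∑ σ : Equiv.Perm (Fin M), g (σ m) * h (σ m'')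
      = (∑ n : Fin M, h n) * ∑ σ : Equiv.Perm (Fin M), g (σ m) := by
    rw [Finset.sum_comm]
    rw [Finset.sum_congr rfl fun σ _ => by
      rw [← Finset.mul_sum, Equiv.sum_comp σ h, mul_comm]]
    rw [← Finset.mul_sum]
  have split : ∑ m'' : Fin M, ∑ σ : Equiv.Perm (Fin M), g (σ m) * h (σ m'')
      = (∑ σ : Equiv.Perm (Fin M), g (σ m) * h (σ m))
        + ((M : ℂ) - 1) * ∑ σ : Equiv.Perm (Fin M), g (σ m) * h (σ m') := by
    rw [← Finset.add_sum_erase _ _ (Finset.mem_univ m)]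
    congr 1
    rw [Finset.sum_congr rfl fun m'' hm'' =>
      sum_perm_pair_const (fun a b => g a * h b) m m'' m' (Finset.ne_of_mem_erase hm'') hne]
    rw [Finset.sum_const, Finset.card_erase_of_mem (Finset.mem_univ m), Finset.card_univ,
      Fintype.card_fin, nsmul_eq_mul]
    have hM1 : 1 ≤ M := by
      rcases Nat.eq_zero_or_pos M with h0 | h0
      · exact absurd (Fin.pos m).ne' (by omega)
      · exact h0
    push_cast [Nat.cast_sub hM1]
    ring
  have hd : (M : ℂ) * ∑ σ : Equiv.Perm (Fin M), g (σ m) * h (σ m)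
      = (Nat.factorial M : ℂ) * ∑ n : Fin M, g n * h n :=
    sum_perm_single (fun n => g n * h n) m
  have hg : (M : ℂ) * ∑ σ : Equiv.Perm (Fin M), g (σ m)
      = (Nat.factorial M : ℂ) * ∑ n : Fin M, g n := sum_perm_single g m
  have := congrArg (fun z => (M : ℂ) * z) (key.symm.trans split)
  simp only [mul_add] at this
  -- (M) * ((∑h) * ∑_σ g(σm)) = M * diag + M*(M-1)*T
  calc (M : ℂ) * ((M : ℂ) - 1) * ∑ σ : Equiv.Perm (Fin M), g (σ m) * h (σ m')
      = (M : ℂ) * (((M:ℂ)-1) * ∑ σ : Equiv.Perm (Fin M), g (σ m) * h (σ m')) := by ring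
    _ = (M : ℂ) * ((∑ n : Fin M, h n) * ∑ σ : Equiv.Perm (Fin M), g (σ m))
        - (M : ℂ) * ∑ σ : Equiv.Perm (Fin M), g (σ m) * h (σ m) := by
        rw [this]; ring
    _ = (∑ n : Fin M, h n) * ((Nat.factorial M : ℂ) * ∑ n : Fin M, g n)
        - (Nat.factorial M : ℂ) * ∑ n : Fin M, g n * h n := by rw [← hg, hd]; ring
    _ = _ := by ring

lemma normSq_sum_ee' (M : ℕ) (hM : 1 ≤ M) {x : ℝ} (hx : ∀ k : ℤ, x ≠ (k : ℝ)) :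
    Complex.normSq (∑ m : Fin M, ee x (m : ℕ)) = ((M : ℝ) * Sa M x) ^ 2 :=
  normSq_sum_ee M hM hx

lemma Sa_neg (M : ℕ) (x : ℝ) : Sa M (-x) = Sa M x := by
  unfold Sa
  rw [show Real.pi * M * (-x) = -(Real.pi * M * x) by ring,
    show Real.pi * (-x) = -(Real.pi * x) by ring, Real.sin_neg, Real.sin_neg, mul_neg,
    neg_div_neg_eq]


lemma scalar_identity (n f a b : ℂ) (hn : n ≠ 0) (hn1 : n - 1 ≠ 0) (hf : f ≠ 0) :
    f⁻¹ * ((n⁻¹) ^ 2 * ((f * ((n * b) ^ 2 - n) / (n * (n - 1))) * (n * a) ^ 2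
        + (f - f * ((n * b) ^ 2 - n) / (n * (n - 1))) * n))
      - (n * a) ^ 2 * (n * b) ^ 2 / n ^ 4
    = n / (n - 1) * (a ^ 2 - 1 / n) * (b ^ 2 - 1 / n) - a ^ 2 * b ^ 2 + 1 / n := by
  have hD : (-(f * n ^ 7) + f * n ^ 8) ≠ 0 := by
    have h : -(f * n ^ 7) + f * n ^ 8 = f * n ^ 7 * (n - 1) := by ring
    rw [h]; exact mul_ne_zero (mul_ne_zero hf (pow_ne_zero _ hn)) hn1
  field_simp
  ring

set_option maxHeartbeats 1000000 in
/-- (Lemma 1, variance) For a uniformly random permutation of `{0,…,M−1}`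
(`M ≥ 2`) and non-integer `p, q`, the variance
`Var[η(p,q)] = E[|η|²] − |E[η]|²` equals
`(M/(M−1))·(Sa_M(p)² − 1/M)·(Sa_M(q)² − 1/M) − Sa_M(p)²·Sa_M(q)² + 1/M`. -/
theorem stmt_6 (M : ℕ) (hM : 2 ≤ M) (p q : ℝ)
    (hp : ∀ k : ℤ, p ≠ (k : ℝ)) (hq : ∀ k : ℤ, q ≠ (k : ℝ)) :
    (Nat.factorial M : ℝ)⁻¹ * (∑ σ : Equiv.Perm (Fin M), ‖eta M σ p q‖ ^ 2) -
        ‖(Nat.factorial M : ℂ)⁻¹ * ∑ σ : Equiv.Perm (Fin M), eta M σ p q‖ ^ 2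
      = ((M : ℝ) / ((M : ℝ) - 1)) * (Sa M p ^ 2 - 1 / (M : ℝ)) * (Sa M q ^ 2 - 1 / (M : ℝ))
          - Sa M p ^ 2 * Sa M q ^ 2 + 1 / (M : ℝ) := by
  have hM0 : (M : ℂ) ≠ 0 := Nat.cast_ne_zero.mpr (by omega)
  have hM0R : (M : ℝ) ≠ 0 := Nat.cast_ne_zero.mpr (by omega)
  have hM1 : (M : ℂ) - 1 ≠ 0 := by
    intro h
    have : (M : ℂ) = ((1 : ℕ) : ℂ) := by push_cast; linear_combination h
    exact absurd (Nat.cast_injective this) (by omega)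
  have hM1R : (M : ℝ) - 1 ≠ 0 := by
    intro h
    have : (M : ℝ) = ((1 : ℕ) : ℝ) := by push_cast; linarith
    exact absurd (Nat.cast_injective this) (by omega)
  have hF : (Nat.factorial M : ℂ) ≠ 0 := Nat.cast_ne_zero.mpr (Nat.factorial_ne_zero M)
  have hFR : (Nat.factorial M : ℝ) ≠ 0 := Nat.cast_ne_zero.mpr (Nat.factorial_ne_zero M)
  set A := ∑ m : Fin M, ee p (m : ℕ) with hA_def
  set B := ∑ m : Fin M, ee (-q) (m : ℕ) with hB_def
  set Ac := ∑ m : Fin M, ee (-p) (m : ℕ) with hAc_def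
  set Bc := ∑ m : Fin M, ee q (m : ℕ) with hBc_def
  have hconjA : (starRingEnd ℂ) A = Ac := by
    rw [hA_def, map_sum]; exact Finset.sum_congr rfl fun m _ => conj_ee p m
  have hconjB : (starRingEnd ℂ) B = Bc := by
    rw [hB_def, map_sum]
    refine Finset.sum_congr rfl fun m _ => ?_
    rw [conj_ee, neg_neg]
  have hAAc : A * Ac = (((M : ℝ) * Sa M p) ^ 2 : ℝ) := by
    rw [← hconjA, Complex.mul_conj, normSq_sum_ee' M (by omega) hp]
  have hBBc : B * Bc = (((M : ℝ) * Sa M q) ^ 2 : ℝ) := by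
    rw [← hconjB, Complex.mul_conj, normSq_sum_ee' M (by omega)
      (fun k h => hq (-k) (by push_cast at h ⊢; linarith)), Sa_neg]
  -- rewrite eta
  have heta : ∀ σ : Equiv.Perm (Fin M),
      eta M σ p q = (M : ℂ)⁻¹ * ∑ m : Fin M, ee p (m : ℕ) * ee (-q) ((σ m : Fin M) : ℕ) := by
    intro σ
    unfold eta
    congr 1
    refine Finset.sum_congr rfl fun m _ => ?_
    unfold ee
    rw [← Complex.exp_add]
    congr 1
    push_cast
    ring
  have hconj_eta : ∀ σ : Equiv.Perm (Fin M),
      (starRingEnd ℂ) (eta M σ p q)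
        = (M : ℂ)⁻¹ * ∑ m : Fin M, ee (-p) (m : ℕ) * ee q ((σ m : Fin M) : ℕ) := by
    intro σ
    rw [heta σ, map_mul, map_inv₀, Complex.conj_natCast, map_sum]
    congr 1
    refine Finset.sum_congr rfl fun m _ => ?_
    rw [map_mul, conj_ee, conj_ee, neg_neg]
  -- expectation
  have hsingle : ∀ m : Fin M, ∑ σ : Equiv.Perm (Fin M), ee (-q) ((σ m : Fin M) : ℕ)
      = (Nat.factorial M : ℂ) * B / M := by
    intro m
    rw [eq_div_iff hM0, mul_comm _ (M : ℂ)]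
    exact sum_perm_single (fun n => ee (-q) (n : ℕ)) m
  have hE : ∑ σ : Equiv.Perm (Fin M), eta M σ p q
      = (Nat.factorial M : ℂ) * (A * B) / (M : ℂ) ^ 2 := by
    simp_rw [heta]
    rw [← Finset.mul_sum, Finset.sum_comm]
    simp_rw [← Finset.mul_sum, hsingle]
    rw [← Finset.sum_mul, ← hA_def]
    field_simp
  -- pair sums
  set T : ℂ := (Nat.factorial M : ℂ) * (B * Bc - M) / ((M : ℂ) * ((M : ℂ) - 1)) with hT_def
  have hC : ∀ m m' : Fin M, (∑ σ : Equiv.Perm (Fin M),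
      ee (-q) ((σ m : Fin M) : ℕ) * ee q ((σ m' : Fin M) : ℕ))
      = if m' = m then (Nat.factorial M : ℂ) else T := by
    intro m m'
    split_ifs with h
    · subst h
      have h1 : ∀ n : Fin M, ee (-q) (n : ℕ) * ee q (n : ℕ) = 1 := by
        intro n; rw [mul_comm]; exact ee_mul_ee_neg q n
      simp_rw [h1]
      simp [Finset.card_univ, Fintype.card_perm]
    · rw [hT_def, eq_div_iff (mul_ne_zero hM0 hM1), mul_comm]
      have := sum_perm_pair (fun n : Fin M => ee (-q) (n : ℕ)) (fun n : Fin M => ee q (n : ℕ))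
        m m' h
      rw [this]
      have h1 : ∑ n : Fin M, ee (-q) (n : ℕ) * ee q (n : ℕ) = (M : ℂ) := by
        have h2 : ∀ n : Fin M, ee (-q) (n : ℕ) * ee q (n : ℕ) = 1 := by
          intro n; rw [mul_comm]; exact ee_mul_ee_neg q n
        simp_rw [h2]
        simp
      rw [h1, ← hB_def, ← hBc_def]
  have hS2 : ∑ σ : Equiv.Perm (Fin M), eta M σ p q * (starRingEnd ℂ) (eta M σ p q)
      = ((M : ℂ)⁻¹) ^ 2 * (T * (A * Ac) + ((Nat.factorial M : ℂ) - T) * M) := by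
    have step1 : ∀ σ : Equiv.Perm (Fin M),
        eta M σ p q * (starRingEnd ℂ) (eta M σ p q)
        = ((M : ℂ)⁻¹) ^ 2 * ∑ m : Fin M, ∑ m' : Fin M,
            (ee p (m : ℕ) * ee (-p) (m' : ℕ)) *
              (ee (-q) ((σ m : Fin M) : ℕ) * ee q ((σ m' : Fin M) : ℕ)) := by
      intro σ
      rw [hconj_eta σ, heta σ, mul_mul_mul_comm, ← pow_two, Finset.sum_mul_sum]
      congr 1
      refine Finset.sum_congr rfl fun m _ => Finset.sum_congr rfl fun m' _ => ?_
      ring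
    simp_rw [step1]
    rw [← Finset.mul_sum, Finset.sum_comm]
    congr 1
    have step2 : ∀ m : Fin M, (∑ σ : Equiv.Perm (Fin M), ∑ m' : Fin M,
        (ee p (m : ℕ) * ee (-p) (m' : ℕ)) *
          (ee (-q) ((σ m : Fin M) : ℕ) * ee q ((σ m' : Fin M) : ℕ)))
        = ∑ m' : Fin M, (ee p (m : ℕ) * ee (-p) (m' : ℕ)) *
            (if m' = m then (Nat.factorial M : ℂ) else T) := by
      intro m
      rw [Finset.sum_comm]
      refine Finset.sum_congr rfl fun m' _ => ?_
      rw [← Finset.mul_sum, hC m m']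
    simp_rw [step2]
    have step3 : ∀ m m' : Fin M,
        (ee p (m : ℕ) * ee (-p) (m' : ℕ)) * (if m' = m then (Nat.factorial M : ℂ) else T)
        = (ee p (m : ℕ) * ee (-p) (m' : ℕ)) * T
          + (if m' = m then (ee p (m : ℕ) * ee (-p) (m' : ℕ)) * ((Nat.factorial M : ℂ) - T)
             else 0) := by
      intro m m'; split_ifs <;> ring
    simp_rw [step3, Finset.sum_add_distrib, Finset.sum_ite_eq' Finset.univ, Finset.mem_univ,
      if_true]
    have hdiag : ∀ m : Fin M, ee p (m : ℕ) * ee (-p) (m : ℕ) = 1 := fun m => ee_mul_ee_neg p m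
    have hsum1 : ∑ m : Fin M, ∑ m' : Fin M, ee p (m : ℕ) * ee (-p) (m' : ℕ) * T
        = T * (A * Ac) := by
      simp_rw [← Finset.sum_mul, ← Finset.mul_sum, ← hAc_def]
      rw [← Finset.sum_mul, ← hA_def]
      ring
    have hsum2 : ∑ m : Fin M, ee p (m : ℕ) * ee (-p) (m : ℕ) * ((Nat.factorial M : ℂ) - T)
        = ((Nat.factorial M : ℂ) - T) * M := by
      simp_rw [hdiag, one_mul]
      simp [Finset.card_univ, mul_comm]
      ring
    rw [hsum1, hsum2]
  -- final algebra
  have key : (Nat.factorial M : ℂ)⁻¹ *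
        (∑ σ : Equiv.Perm (Fin M), eta M σ p q * (starRingEnd ℂ) (eta M σ p q)) -
      ((Nat.factorial M : ℂ)⁻¹ * ∑ σ : Equiv.Perm (Fin M), eta M σ p q) *
        (starRingEnd ℂ) ((Nat.factorial M : ℂ)⁻¹ * ∑ σ : Equiv.Perm (Fin M), eta M σ p q)
      = (((M : ℝ) / ((M : ℝ) - 1)) * (Sa M p ^ 2 - 1 / (M : ℝ)) * (Sa M q ^ 2 - 1 / (M : ℝ))
          - Sa M p ^ 2 * Sa M q ^ 2 + 1 / (M : ℝ) : ℝ) := by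
    have hconjE : (starRingEnd ℂ) (∑ σ : Equiv.Perm (Fin M), eta M σ p q)
        = (Nat.factorial M : ℂ) * (Ac * Bc) / (M : ℂ) ^ 2 := by
      rw [hE, map_div₀, map_mul, map_mul, hconjA, hconjB, map_pow, Complex.conj_natCast,
        Complex.conj_natCast]
    rw [map_mul, map_inv₀, Complex.conj_natCast, hconjE, hE, hS2]
    have hab : (A * B) * (Ac * Bc)
        = ((((M : ℝ) * Sa M p) ^ 2 : ℝ) : ℂ) * ((((M : ℝ) * Sa M q) ^ 2 : ℝ) : ℂ) := by
      rw [mul_mul_mul_comm, hAAc, hBBc]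
    have e1 : (Nat.factorial M : ℂ)⁻¹ * ((Nat.factorial M : ℂ) * (A * B) / (M : ℂ) ^ 2)
        = (A * B) / (M : ℂ) ^ 2 := by
      rw [mul_div_assoc, ← mul_assoc, inv_mul_cancel₀ hF, one_mul]
    have e2 : (Nat.factorial M : ℂ)⁻¹ * ((Nat.factorial M : ℂ) * (Ac * Bc) / (M : ℂ) ^ 2)
        = (Ac * Bc) / (M : ℂ) ^ 2 := by
      rw [mul_div_assoc, ← mul_assoc, inv_mul_cancel₀ hF, one_mul]
    rw [e1, e2, div_mul_div_comm, hab, hT_def, hAAc, hBBc]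
    push_cast
    linear_combination scalar_identity (M : ℂ) (Nat.factorial M : ℂ) ((Sa M p : ℝ) : ℂ)
      ((Sa M q : ℝ) : ℂ) hM0 hM1 hF
  -- conclude
  simp only [Complex.sq_norm]
  rw [← Complex.ofReal_inj]
  push_cast [← Complex.mul_conj]
  exact key.trans (by push_cast; ring)
end
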